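/- Let α ≥ 2 be an integer and let C be a minimal d_α-D_α cut in A_α with C ≠ {d_α}. Then there exist two (possibly empty) disjoint sets J_1 and J_2 with J_1 ∪ J_2 = {1,…,α−1} such that: (i) x_S ∈ C for every S ⊆ {1,…,α−1} with |S| ≥ 2, J_1 ∩ S ≠ ∅ and J_2 ∩ S ≠ ∅; (ii) x_{S∪{α}} ∈ C for every nonempty S ⊆ {1,…,α−1} with J_2 ∩ S ≠ ∅; and (iii) if J_2 = ∅ then d_S ∈ C for every nonempty S ⊆ {1,…,α−1}. -/

import Mathlib

/-- Raw vertex names for the auxiliary graph `A_α`: the special vertex `top = d_α`,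
vertices `d S`, and vertices `x S`. -/
inductive AV : Type where
  | top : AV
  | d : Finset ℕ → AV
  | x : Finset ℕ → AV
deriving DecidableEq

/-- The vertices actually present in `A_α`: `d_α`; `d S` for nonempty
`S ⊆ {1, …, α-1}`; and `x S` for `S ⊆ {1, …, α}` with `|S| ≥ 2`. -/
def AValid (α : ℕ) : AV → Prop
  | AV.top => True
  | AV.d S => S.Nonempty ∧ S ⊆ Finset.Icc 1 (α - 1)
  | AV.x S => 2 ≤ S.card ∧ S ⊆ Finset.Icc 1 α

/-- One-sided adjacency for `A_α`: `d_α x_S` when `α ∈ S`; `d_S x_T` when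
`S ∩ T ≠ ∅`; `x_S x_T` when `S ≠ T` and `S ∩ T ≠ ∅`. -/
def AAdj (α : ℕ) : AV → AV → Prop
  | AV.top, AV.x S => α ∈ S
  | AV.d S, AV.x T => (S ∩ T).Nonempty
  | AV.x S, AV.x T => S ≠ T ∧ (S ∩ T).Nonempty
  | _, _ => False

/-- The auxiliary graph `A_α`, on the valid vertices. -/
def Agraph (α : ℕ) : SimpleGraph {v : AV // AValid α v} where
  Adj a b := AAdj α a.1 b.1 ∨ AAdj α b.1 a.1
  symm := ⟨fun _ _ h => Or.symm h⟩
  loopless := by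
    constructor
    rintro ⟨v, hv⟩ h
    rcases v with _ | S | S <;> simp only [AAdj] at h <;> tauto

/-- The vertex `d_α` of `A_α`. -/
def dTop (α : ℕ) : {v : AV // AValid α v} := ⟨AV.top, trivial⟩

/-- The set `D_α = {d_S : S ⊆ {1, …, α-1}, S ≠ ∅}` of vertices of `A_α`. -/
def Dset (α : ℕ) : Set {v : AV // AValid α v} := {v | ∃ S, v.1 = AV.d S}

/-- `C` is an `A`-`B` cut in `G`: the graph `G - C` (i.e. the subgraph of `G`
induced on `Cᶜ`) contains no path from `A \ C` to `B \ C`. -/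
def IsCut {V : Type*} (G : SimpleGraph V) (A B C : Set V) : Prop :=
  ∀ (a b : ↥(Cᶜ : Set V)), (a : V) ∈ A → (b : V) ∈ B →
    ¬ (G.induce (Cᶜ : Set V)).Reachable a b

/-- `C` is a minimal `A`-`B` cut in `G`. -/
def IsMinimalCut {V : Type*} (G : SimpleGraph V) (A B C : Set V) : Prop :=
  IsCut G A B C ∧ ∀ x ∈ C, ¬ IsCut G A B (C \ {x})

/-- Validity of the vertex `x_{S ∪ {α}}` for nonempty `S ⊆ {1, …, α-1}`. -/
lemma aValid_x_union (α : ℕ) (hα : 2 ≤ α) (S : Finset ℕ)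
    (hS : S ⊆ Finset.Icc 1 (α - 1)) (hne : S.Nonempty) :
    AValid α (AV.x (S ∪ {α})) := by
  have hαS : α ∉ S := by
    intro h
    have := (Finset.mem_Icc.1 (hS h)).2
    omega
  constructor
  · have hcard : (S ∪ {α}).card = S.card + 1 := by
      rw [Finset.union_comm, ← Finset.insert_eq, Finset.card_insert_of_notMem hαS]
    have : 1 ≤ S.card := Finset.one_le_card.2 hne
    omega
  · refine Finset.union_subset (hS.trans (Finset.Icc_subset_Icc le_rfl (Nat.sub_le α 1))) ?_
    simp only [Finset.singleton_subset_iff, Finset.mem_Icc]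
    omega

/-- Validity of the vertex `x_R` for `R ⊆ {1, …, α-1}` with `|R| ≥ 2`. -/
lemma aValid_x_low (α : ℕ) (R : Finset ℕ) (hR : R ⊆ Finset.Icc 1 (α - 1))
    (hcard : 2 ≤ R.card) : AValid α (AV.x R) :=
  ⟨hcard, hR.trans (Finset.Icc_subset_Icc le_rfl (Nat.sub_le α 1))⟩

/-- Let `C` be a minimal `d_α`-`D_α` cut in `A_α` with `C ≠ {d_α}`.  Then there are
two (possibly empty) disjoint sets `J₁, J₂` with `J₁ ∪ J₂ = {1, …, α-1}` such that:
(i) `x_S ∈ C` for every `S ⊆ {1, …, α-1}` with `|S| ≥ 2`, `J₁ ∩ S ≠ ∅` and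
`J₂ ∩ S ≠ ∅`; (ii) `x_{S ∪ {α}} ∈ C` for every nonempty `S ⊆ {1, …, α-1}` with
`J₂ ∩ S ≠ ∅`; (iii) if `J₂ = ∅` then `d_S ∈ C` for every nonempty
`S ⊆ {1, …, α-1}`. -/
theorem cut_partition (α : ℕ) (hα : 2 ≤ α) (C : Set {v : AV // AValid α v})
    (hC : IsMinimalCut (Agraph α) {dTop α} (Dset α) C) (hCne : C ≠ {dTop α}) :
    ∃ J₁ J₂ : Finset ℕ, Disjoint J₁ J₂ ∧ J₁ ∪ J₂ = Finset.Icc 1 (α - 1) ∧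
      (∀ (S : Finset ℕ) (hS : S ⊆ Finset.Icc 1 (α - 1)) (hcard : 2 ≤ S.card),
        (J₁ ∩ S).Nonempty → (J₂ ∩ S).Nonempty →
        (⟨AV.x S, aValid_x_low α S hS hcard⟩ : {v : AV // AValid α v}) ∈ C) ∧
      (∀ (S : Finset ℕ) (hSne : S.Nonempty) (hS : S ⊆ Finset.Icc 1 (α - 1)),
        (J₂ ∩ S).Nonempty →
        (⟨AV.x (S ∪ {α}), aValid_x_union α hα S hS hSne⟩ :
          {v : AV // AValid α v}) ∈ C) ∧
      (J₂ = ∅ →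
        ∀ (S : Finset ℕ) (hSne : S.Nonempty) (hS : S ⊆ Finset.Icc 1 (α - 1)),
        (⟨AV.d S, hSne, hS⟩ : {v : AV // AValid α v}) ∈ C) := by
  classical
  obtain ⟨hcut, hmin⟩ := hC
  -- `dTop α ∉ C`
  have htop : dTop α ∉ C := by
    intro htopC
    have hex : ∃ x ∈ C, x ≠ dTop α := by
      by_contra hno
      push_neg at hno
      exact hCne (Set.eq_singleton_iff_unique_mem.2 ⟨htopC, hno⟩)
    obtain ⟨x, hxC, hxne⟩ := hex
    apply hmin x hxC
    intro a b ha _ _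
    have hmem : dTop α ∈ (C \ {x} : Set _) := ⟨htopC, by simpa using hxne.symm⟩
    have : (a : {v : AV // AValid α v}) = dTop α := ha
    exact a.2 (this ▸ hmem)
  -- reachable set from `dTop`
  let K : Set {v : AV // AValid α v} :=
    {v | ∃ hv : v ∈ (Cᶜ : Set {v : AV // AValid α v}),
      ((Agraph α).induce (Cᶜ : Set {v : AV // AValid α v})).Reachable ⟨dTop α, htop⟩ ⟨v, hv⟩}
  have htopK : dTop α ∈ K := ⟨htop, SimpleGraph.Reachable.refl _⟩
  have hKadj : ∀ v w : {v : AV // AValid α v}, v ∈ K → w ∉ C →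
      (Agraph α).Adj v w → w ∈ K := by
    rintro v w ⟨hv, hr⟩ hw hadj
    exact ⟨hw, hr.trans (SimpleGraph.Adj.reachable
      (show ((Agraph α).induce _).Adj ⟨v, hv⟩ ⟨w, hw⟩ from hadj))⟩
  have hKD : ∀ v : {v : AV // AValid α v}, v ∈ K → v ∈ Dset α → False := by
    rintro v ⟨hv, hr⟩ hvD
    exact hcut ⟨dTop α, htop⟩ ⟨v, hv⟩ rfl hvD hr
  -- definitions of J₁, J₂
  let P : ℕ → Prop := fun i => ∃ T : Finset ℕ, ∃ h : AValid α (AV.x T),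
    i ∈ T ∧ (⟨AV.x T, h⟩ : {v : AV // AValid α v}) ∈ K
  let J₁ : Finset ℕ := (Finset.Icc 1 (α - 1)).filter P
  let J₂ : Finset ℕ := Finset.Icc 1 (α - 1) \ J₁
  have hJ1sub : J₁ ⊆ Finset.Icc 1 (α - 1) := Finset.filter_subset _ _
  have hJ1mem : ∀ i ∈ J₁, P i := fun i hi => (Finset.mem_filter.1 hi).2
  have hJ2mem : ∀ i ∈ J₂, ¬ P i := by
    intro i hi hPi
    have h2 := Finset.mem_sdiff.1 hi
    exact h2.2 (Finset.mem_filter.2 ⟨h2.1, hPi⟩)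
  refine ⟨J₁, J₂, Finset.disjoint_sdiff, ?_, ?_, ?_, ?_⟩
  · rw [Finset.union_sdiff_self_eq_union]
    exact Finset.union_eq_right.2 hJ1sub
  · -- (i)
    intro S hS hcard h1 h2
    by_contra hxC
    obtain ⟨i, hi⟩ := h1
    obtain ⟨j, hj⟩ := h2
    obtain ⟨hiJ, hiS⟩ := Finset.mem_inter.1 hi
    obtain ⟨hjJ, hjS⟩ := Finset.mem_inter.1 hj
    obtain ⟨T, hT, hiT, hTK⟩ := hJ1mem i hiJ
    have hxK : (⟨AV.x S, aValid_x_low α S hS hcard⟩ : {v : AV // AValid α v}) ∈ K := by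
      by_cases hTS : T = S
      · have : (⟨AV.x T, hT⟩ : {v : AV // AValid α v})
            = ⟨AV.x S, aValid_x_low α S hS hcard⟩ := Subtype.ext (by subst hTS; rfl)
        exact this ▸ hTK
      · refine hKadj _ _ hTK hxC (Or.inl ?_)
        exact ⟨hTS, ⟨i, Finset.mem_inter.2 ⟨hiT, hiS⟩⟩⟩
    exact hJ2mem j hjJ ⟨S, aValid_x_low α S hS hcard, hjS, hxK⟩
  · -- (ii)
    intro S hSne hS h2
    by_contra hxC
    obtain ⟨j, hj⟩ := h2
    obtain ⟨hjJ, hjS⟩ := Finset.mem_inter.1 hj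
    have hv := aValid_x_union α hα S hS hSne
    have hxK : (⟨AV.x (S ∪ {α}), hv⟩ : {v : AV // AValid α v}) ∈ K := by
      refine hKadj _ _ htopK hxC (Or.inl ?_)
      exact Finset.mem_union_right _ (Finset.mem_singleton_self α)
    exact hJ2mem j hjJ ⟨S ∪ {α}, hv, Finset.mem_union_left _ hjS, hxK⟩
  · -- (iii)
    intro hJ2e S hSne hS
    by_contra hdC
    have hSne' := hSne
    obtain ⟨i, hiS⟩ := hSne'
    have hiJ : i ∈ J₁ := by
      have hiI : i ∈ Finset.Icc 1 (α - 1) := hS hiS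
      have hsub : Finset.Icc 1 (α - 1) ⊆ J₁ := Finset.sdiff_eq_empty_iff_subset.1 hJ2e
      exact hsub hiI
    obtain ⟨T, hT, hiT, hTK⟩ := hJ1mem i hiJ
    have hdK : (⟨AV.d S, hSne, hS⟩ : {v : AV // AValid α v}) ∈ K := by
      refine hKadj _ _ hTK hdC (Or.inr ?_)
      exact ⟨i, Finset.mem_inter.2 ⟨hiS, hiT⟩⟩
    exact hKD _ hdK ⟨S, rfl⟩
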